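/- For every μ > 0 and every z ∈ ℂ with Re z > 0, the regularized Gamma function converges to a multiple of the Gamma function as t → ∞: lim_{t→∞} Γ_{μ,t}(z) = μ^{−z} Γ(z), where μ^{−z} = e^{−z log μ} with the real logarithm of μ and Γ is the complex Gamma function. -/

import Mathlib

open MeasureTheory Complex Real Filter

section Aux
open Set
lemma muexp_image (μ : ℝ) (hμ : 0 < μ) :
    (fun x : ℝ => μ * Real.exp x) '' Set.univ = Set.Ioi (0:ℝ) := by
  rw [Set.image_univ]
  ext y
  constructor
  · rintro ⟨x, rfl⟩
    exact mul_pos hμ (Real.exp_pos x)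
  · intro hy
    refine ⟨Real.log (y / μ), ?_⟩
    show μ * Real.exp _ = y
    rw [Real.exp_log (div_pos hy hμ), mul_div_cancel₀ _ hμ.ne']

lemma muexp_eq (μ : ℝ) (hμ : 0 < μ) (x : ℝ) :
    μ * Real.exp x = Real.exp (Real.log μ + x) := by
  rw [Real.exp_add, Real.exp_log hμ]

lemma muexp_inj (μ : ℝ) (hμ : 0 < μ) :
    Set.InjOn (fun x : ℝ => μ * Real.exp x) Set.univ := by
  intro a _ b _ h
  simpa [muexp_eq μ hμ] using Real.exp_injective (by simpa [muexp_eq μ hμ] using h)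

lemma muexp_deriv (μ : ℝ) (x : ℝ) :
    HasDerivWithinAt (fun x : ℝ => μ * Real.exp x) (μ * Real.exp x) Set.univ x :=
  ((Real.hasDerivAt_exp x).const_mul μ).hasDerivWithinAt

lemma bound_integrable (μ : ℝ) (hμ : 0 < μ) (a : ℝ) (ha : 0 < a) :
    Integrable (fun x : ℝ => Real.exp (-(μ * Real.exp x)) * Real.exp (a * x)) := by
  have key := (integrableOn_image_iff_integrableOn_abs_deriv_smul
    (s := (Set.univ : Set ℝ)) MeasurableSet.univ (fun x _ => muexp_deriv μ x)
    (muexp_inj μ hμ) (fun s => Real.exp (-s) * s ^ (a - 1))).mp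
    (by rw [muexp_image μ hμ]; exact Real.GammaIntegral_convergent ha)
  rw [integrableOn_univ] at key
  have hkey : (fun x : ℝ => |μ * Real.exp x| • (Real.exp (-(μ * Real.exp x)) *
      (μ * Real.exp x) ^ (a - 1)))
      = fun x : ℝ => Real.exp (a * Real.log μ) *
        (Real.exp (-(μ * Real.exp x)) * Real.exp (a * x)) := by
    funext x
    have h1 : μ * Real.exp x = Real.exp (Real.log μ + x) := muexp_eq μ hμ x
    rw [h1, smul_eq_mul, abs_of_pos (Real.exp_pos _),
      Real.rpow_def_of_pos (Real.exp_pos _), Real.log_exp]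
    simp only [← Real.exp_add]
    congr 1
    ring
  rw [hkey] at key
  have := key.const_mul (Real.exp (a * Real.log μ))⁻¹
  simpa [← mul_assoc, inv_mul_cancel₀ (Real.exp_ne_zero _)] using this

lemma integral_limit (μ : ℝ) (hμ : 0 < μ) (z : ℂ) (hz : 0 < z.re) :
    (∫ x : ℝ, Complex.exp ((-(μ * Real.exp x) : ℝ) : ℂ) * Complex.exp (z * (x : ℂ)))
      = Complex.exp (-z * (Real.log μ : ℂ)) * Complex.Gamma z := by
  have key := integral_image_eq_integral_abs_deriv_smul (s := (Set.univ : Set ℝ))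
    MeasurableSet.univ (fun x _ => muexp_deriv μ x) (muexp_inj μ hμ)
    (fun s : ℝ => (↑(Real.exp (-s)) : ℂ) * (s : ℂ) ^ (z - 1))
  rw [muexp_image μ hμ, MeasureTheory.setIntegral_univ] at key
  have hfun : (fun x : ℝ => |μ * Real.exp x| •
      ((↑(Real.exp (-(μ * Real.exp x))) : ℂ) * (↑(μ * Real.exp x) : ℂ) ^ (z - 1)))
      = fun x : ℝ => Complex.exp (z * (Real.log μ : ℂ)) *
        (Complex.exp ((-(μ * Real.exp x) : ℝ) : ℂ) * Complex.exp (z * (x : ℂ))) := by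
    funext x
    have hc : μ * Real.exp x = Real.exp (Real.log μ + x) := muexp_eq μ hμ x
    rw [abs_of_pos (mul_pos hμ (Real.exp_pos x)), real_smul, hc]
    rw [Complex.ofReal_exp, Complex.ofReal_exp,
      Complex.cpow_def_of_ne_zero (Complex.exp_ne_zero _), Complex.log_exp
        (by simpa using Real.pi_pos) (by simpa using Real.pi_nonneg)]
    simp only [← Complex.exp_add]
    congr 1
    push_cast
    ring
  rw [hfun, MeasureTheory.integral_const_mul] at key
  have hG : Complex.Gamma z = Complex.exp (z * (Real.log μ : ℂ)) *
      ∫ x : ℝ, Complex.exp ((-(μ * Real.exp x) : ℝ) : ℂ) * Complex.exp (z * (x : ℂ)) := by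
    rw [Complex.Gamma_eq_integral hz]; exact key
  rw [hG, ← mul_assoc, ← Complex.exp_add]
  simp
end Aux

/-- The regularized Gamma function `Γ_{μ,t}(z) = ∫_ℝ e^{-μe^x} e^{zx} e^{-x²/(2t)} dx`. -/
noncomputable def regGamma (μ t : ℝ) (z : ℂ) : ℂ :=
  ∫ x : ℝ, Complex.exp ((-(μ * Real.exp x) : ℝ) : ℂ) * Complex.exp (z * (x : ℂ)) *
    Complex.exp ((-(x ^ 2 / (2 * t)) : ℝ) : ℂ)


/-- For every `μ > 0` and every `z ∈ ℂ` with `Re z > 0`, the regularized Gamma function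
converges to a multiple of the Gamma function as `t → ∞`:
`lim_{t→∞} Γ_{μ,t}(z) = μ^{-z} Γ(z)`, where `μ^{-z} = e^{-z log μ}` with the real
logarithm of `μ`. -/
theorem regGamma_tendsto_gamma (μ : ℝ) (hμ : 0 < μ) (z : ℂ) (hz : 0 < z.re) :
    Tendsto (fun t : ℝ => regGamma μ t z) atTop
      (nhds (Complex.exp (-z * (Real.log μ : ℂ)) * Complex.Gamma z)) := by
  rw [← integral_limit μ hμ z hz]
  have main := MeasureTheory.tendsto_integral_filter_of_dominated_convergence
    (μ := MeasureTheory.volume) (l := atTop)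
    (F := fun t : ℝ => fun x : ℝ => Complex.exp ((-(μ * Real.exp x) : ℝ) : ℂ) *
      Complex.exp (z * (x : ℂ)) * Complex.exp ((-(x ^ 2 / (2 * t)) : ℝ) : ℂ))
    (f := fun x : ℝ => Complex.exp ((-(μ * Real.exp x) : ℝ) : ℂ) * Complex.exp (z * (x : ℂ)))
    (bound := fun x : ℝ => Real.exp (-(μ * Real.exp x)) * Real.exp (z.re * x))
    ?_ ?_ (bound_integrable μ hμ z.re hz) ?_
  · exact main
  · filter_upwards with t
    apply Continuous.aestronglyMeasurable
    fun_prop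
  · filter_upwards [eventually_gt_atTop (0:ℝ)] with t ht
    filter_upwards with x
    rw [norm_mul, norm_mul,
      Complex.norm_exp, Complex.norm_exp, Complex.norm_exp]
    simp only [Complex.ofReal_re, Complex.mul_re, Complex.ofReal_im, mul_zero, sub_zero]
    have h1 : Real.exp (-(x ^ 2 / (2 * t))) ≤ 1 := by
      rw [Real.exp_le_one_iff]
      exact neg_nonpos.mpr (by positivity)
    calc Real.exp (-(μ * Real.exp x)) * Real.exp (z.re * x) * Real.exp (-(x ^ 2 / (2 * t)))
        ≤ Real.exp (-(μ * Real.exp x)) * Real.exp (z.re * x) * 1 := by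
          apply mul_le_mul_of_nonneg_left h1; positivity
      _ = _ := by rw [mul_one]
  · filter_upwards with x
    have h0 : Tendsto (fun t : ℝ => -(x ^ 2 / (2 * t))) atTop (nhds 0) := by
      have : Tendsto (fun t : ℝ => x ^ 2 / (2 * t)) atTop (nhds 0) :=
        Tendsto.div_atTop tendsto_const_nhds
          (Tendsto.const_mul_atTop (by norm_num) tendsto_id)
      simpa using this.neg
    have h2 : Tendsto (fun t : ℝ => Complex.exp ((-(x ^ 2 / (2 * t)) : ℝ) : ℂ)) atTop
        (nhds 1) := by
      have := (Complex.continuous_exp.tendsto 0).comp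
        ((Complex.continuous_ofReal.tendsto 0).comp h0)
      simpa [Function.comp_def] using this
    have := tendsto_const_nhds (x := Complex.exp ((-(μ * Real.exp x) : ℝ) : ℂ) *
      Complex.exp (z * (x : ℂ))) (f := atTop (α := ℝ)) |>.mul h2
    simpa using this
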